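/- Let $1<p<q<\infty$, $n\ge 1$, and $\alpha<n(p-1)$. Define $C(p,q,n,\alpha)=\omega_{n-1}^{1+\frac{1}{q}-\frac{1}{p}}\left(\frac{p-1}{n(p-1)-\alpha}\right)^{\frac{1}{p'}+\frac{1}{q}}\left(\frac{p'}{q}\right)^{\frac{1}{p}}\left(\frac{\frac{q-p}{p}\Gamma\left(\frac{pq}{q-p}\right)}{\Gamma\left(\frac{p}{q-p}\right)\Gamma\left(\frac{p(q-1)}{q-p}\right)}\right)^{\frac{1}{p}-\frac{1}{q}}$, where $\omega_{n-1}>0$ and $p'=p/(p-1)$. Then $\lim_{q\to p^+} C(p,q,n,\alpha)=\frac{p\,\omega_{n-1}}{n(p-1)-\alpha}$. -/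

import Mathlib

open Set Filter Real Topology

lemma log_succ_sub_le (N : ℝ) (hN : 1 ≤ N) : log (N + 1) - log N ≤ 1 / N := by
  have h0 : (0:ℝ) < N := by linarith
  rw [← log_div (by linarith) (ne_of_gt h0)]
  have := Real.log_le_sub_one_of_pos (x := (N+1)/N) (by positivity)
  have : (N+1)/N - 1 = 1/N := by field_simp; ring
  linarith [Real.log_le_sub_one_of_pos (x := (N+1)/N) (by positivity)]

lemma le_log_succ_sub (N : ℝ) (hN : 1 ≤ N) : 1 / (N + 1) ≤ log (N + 1) - log N := by
  have h0 : (0:ℝ) < N := by linarith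
  have h1 : (0:ℝ) < N + 1 := by linarith
  have h := Real.log_le_sub_one_of_pos (x := N/(N+1)) (by positivity)
  rw [log_div (ne_of_gt h0) (ne_of_gt h1)] at h
  have : N/(N+1) - 1 = -(1/(N+1)) := by field_simp; ring
  linarith

lemma log_factorial_bounds (n : ℕ) (hn : 1 ≤ n) :
    (n:ℝ) * log n - n + 1 ≤ log (n.factorial : ℝ) ∧ log (n.factorial : ℝ) ≤ (n:ℝ) * log n - n + 1 + log (n:ℝ) := by
  induction n with
  | zero => omega
  | succ m ih =>
    rcases Nat.eq_or_lt_of_le hn with h | h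
    · simp [← h]
    · have hm : 1 ≤ m := by omega
      obtain ⟨ih1, ih2⟩ := ih hm
      have hm1 : (1:ℝ) ≤ (m:ℝ) := by exact_mod_cast hm
      have hmpos : (0:ℝ) < m := by linarith
      have hfac : ((m+1).factorial : ℝ) = ((m:ℝ)+1) * (m.factorial : ℝ) := by
        rw [Nat.factorial_succ]; push_cast; ring
      have hfpos : (0:ℝ) < (m.factorial : ℝ) := by exact_mod_cast Nat.factorial_pos m
      have hlog : log ((m+1).factorial : ℝ) = log ((m:ℝ)+1) + log (m.factorial : ℝ) := by
        rw [hfac, log_mul (by positivity) (ne_of_gt hfpos)]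
      have h1 := log_succ_sub_le (m:ℝ) hm1
      have h2 := le_log_succ_sub (m:ℝ) hm1
      push_cast
      push_cast at hlog
      rw [hlog]
      have hA : (m:ℝ) * (log ((m:ℝ)+1) - log (m:ℝ)) ≤ 1 := by
        have := mul_le_mul_of_nonneg_left h1 (le_of_lt hmpos)
        rwa [mul_one_div, div_self (ne_of_gt hmpos)] at this
      have hB : 1 ≤ ((m:ℝ)+1) * (log ((m:ℝ)+1) - log (m:ℝ)) := by
        have := mul_le_mul_of_nonneg_left h2 (by positivity : (0:ℝ) ≤ (m:ℝ)+1)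
        rwa [mul_one_div, div_self (by positivity : ((m:ℝ)+1) ≠ 0)] at this
      constructor
      · nlinarith [hA, ih1]
      · nlinarith [hB, ih2]

lemma mono_xlogx : MonotoneOn (fun u : ℝ => u * log u - u) (Ici 1) := by
  have key : ∀ x ∈ Ici (1:ℝ), HasDerivAt (fun u : ℝ => u * log u - u) (log x) x := by
    intro x hx
    simp only [mem_Ici] at hx
    have h := (Real.hasDerivAt_mul_log (by linarith : x ≠ 0)).sub (hasDerivAt_id x)
    have h2 : HasDerivAt (fun u : ℝ => u * log u - u) (log x + 1 - 1) x := h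
    simpa using h2
  apply monotoneOn_of_deriv_nonneg (convex_Ici 1)
  · exact fun x hx => (key x hx).continuousAt.continuousWithinAt
  · intro x hx
    rw [interior_Ici] at hx
    exact ((key x (mem_Ici.mpr (le_of_lt hx))).differentiableAt).differentiableWithinAt
  · intro x hx
    rw [interior_Ici] at hx
    rw [(key x (mem_Ici.mpr (le_of_lt hx))).deriv]
    exact Real.log_nonneg (le_of_lt (mem_Ioi.mp hx))

lemma abs_logGamma_sub (x : ℝ) (hx : 1 ≤ x) :
    |log (Real.Gamma x) - (x * log x - x)| ≤ 2 * log x + 2 := by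
  set n := ⌊x⌋₊ with hn
  have hx0 : (0:ℝ) < x := by linarith
  have hn1 : 1 ≤ n := Nat.le_floor (by exact_mod_cast hx)
  have hnx : (n:ℝ) ≤ x := Nat.floor_le (by linarith)
  have hxn : x < (n:ℝ) + 1 := Nat.lt_floor_add_one x
  have hnR : (1:ℝ) ≤ (n:ℝ) := by exact_mod_cast hn1
  set s : ℝ := x - n with hs
  have hs0 : 0 ≤ s := by simp [hs]; linarith
  have hs1 : s < 1 := by simp [hs]; linarith
  have cv := Real.convexOn_log_Gamma
  have hΓ1 : Real.Gamma ((n:ℝ) + 1) = (n.factorial : ℝ) := by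
    exact_mod_cast Real.Gamma_nat_eq_factorial n
  have hΓ2 : Real.Gamma ((n:ℝ) + 2) = ((n+1).factorial : ℝ) := by
    rw [show ((n:ℝ)+2) = (((n+1:ℕ)):ℝ)+1 by push_cast; ring, Real.Gamma_nat_eq_factorial]
  have hΓ0 : Real.Gamma ((n:ℝ)) = ((n-1).factorial : ℝ) := by
    rw [show ((n:ℝ)) = (((n-1:ℕ)):ℝ)+1 by rw [Nat.cast_sub hn1]; push_cast; ring,
      Real.Gamma_nat_eq_factorial]
  -- upper bound
  have hub : log (Real.Gamma x) ≤ log (n.factorial : ℝ) := by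
    have h := cv.2 (mem_Ioi.mpr (by positivity : (0:ℝ) < (n:ℝ)))
      (mem_Ioi.mpr (by positivity : (0:ℝ) < (n:ℝ)+1))
      (by linarith : (0:ℝ) ≤ 1 - s) hs0 (by ring)
    simp only [smul_eq_mul, Function.comp] at h
    rw [show (1-s)*(n:ℝ) + s*((n:ℝ)+1) = x by simp [hs]; ring] at h
    rw [hΓ0, hΓ1] at h
    have hmono : log (((n-1).factorial : ℝ)) ≤ log ((n.factorial : ℝ)) := by
      have : ((n-1).factorial : ℝ) ≤ (n.factorial : ℝ) := by
        exact_mod_cast Nat.factorial_le (Nat.sub_le n 1)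
      exact Real.log_le_log (by positivity) this
    nlinarith [hmono]
  -- lower bound
  have hfacsplit : log (((n+1).factorial : ℝ)) = log ((n:ℝ)+1) + log ((n.factorial : ℝ)) := by
    rw [show (((n+1).factorial : ℝ)) = ((n:ℝ)+1) * (n.factorial : ℝ) by
        rw [Nat.factorial_succ]; push_cast; ring]
    rw [Real.log_mul (by positivity) (by positivity)]
  have hff : log ((n.factorial : ℝ)) ≤ log (((n+1).factorial : ℝ)) := by
    have : ((n.factorial) : ℝ) ≤ ((n+1).factorial : ℝ) := by
      exact_mod_cast Nat.factorial_le (Nat.le_succ n)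
    exact Real.log_le_log (by positivity) this
  have hlb : log ((n.factorial : ℝ)) - log ((n:ℝ)+1) ≤ log (Real.Gamma x) := by
    have h1 := cv.2 (mem_Ioi.mpr hx0)
      (mem_Ioi.mpr (by nlinarith : (0:ℝ) < (n:ℝ) + 2 - s))
      (by norm_num : (0:ℝ) ≤ 1/2) (by norm_num : (0:ℝ) ≤ 1/2) (by norm_num)
    have h2 := cv.2 (mem_Ioi.mpr (by positivity : (0:ℝ) < (n:ℝ)+1))
      (mem_Ioi.mpr (by positivity : (0:ℝ) < (n:ℝ)+2)) hs0 (by linarith : (0:ℝ) ≤ 1 - s)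
      (by ring)
    simp only [smul_eq_mul, Function.comp] at h1 h2
    rw [show (1/2)*x + (1/2)*((n:ℝ) + 2 - s) = (n:ℝ)+1 by simp [hs]; ring] at h1
    rw [show s*((n:ℝ)+1) + (1-s)*((n:ℝ)+2) = (n:ℝ) + 2 - s by ring] at h2
    rw [hΓ1, hΓ2] at *
    rw [hfacsplit] at *
    nlinarith [h1, h2, hs0, hff, hfacsplit]
  -- combine
  obtain ⟨hf1, hf2⟩ := log_factorial_bounds n hn1
  have hmono1 : (n:ℝ) * log (n:ℝ) - (n:ℝ) ≤ x * log x - x := by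
    have := mono_xlogx (mem_Ici.mpr hnR) (mem_Ici.mpr hx) hnx
    simpa using this
  have hmono2 : x * log x - x ≤ ((n:ℝ)+1) * log ((n:ℝ)+1) - ((n:ℝ)+1) := by
    have := mono_xlogx (mem_Ici.mpr hx) (mem_Ici.mpr (by linarith : (1:ℝ) ≤ (n:ℝ)+1))
      (le_of_lt hxn)
    simpa using this
  have hlogn : log (n:ℝ) ≤ log x := Real.log_le_log (by positivity) hnx
  have hlog2 : log 2 ≤ (1:ℝ) := by
    have := Real.log_le_sub_one_of_pos (by norm_num : (0:ℝ) < 2); linarith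
  have hlogn1 : log ((n:ℝ)+1) ≤ 1 + log x := by
    have h2x : (n:ℝ)+1 ≤ 2*x := by linarith
    have : log ((n:ℝ)+1) ≤ log (2*x) := Real.log_le_log (by positivity) h2x
    rw [Real.log_mul (by norm_num) (ne_of_gt hx0)] at this
    linarith
  have hA : (n:ℝ) * (log ((n:ℝ)+1) - log (n:ℝ)) ≤ 1 := by
    have h1 := log_succ_sub_le (n:ℝ) hnR
    have := mul_le_mul_of_nonneg_left h1 (by positivity : (0:ℝ) ≤ (n:ℝ))
    rwa [mul_one_div, div_self (by positivity : (n:ℝ) ≠ 0)] at this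
  have hlogx0 : 0 ≤ log x := Real.log_nonneg hx
  have hlogn0 : 0 ≤ log (n:ℝ) := Real.log_nonneg hnR
  rw [abs_le]
  have hexp : ((n:ℝ)+1)*log ((n:ℝ)+1) = (n:ℝ)*log ((n:ℝ)+1) + log ((n:ℝ)+1) := by ring
  have hA' : (n:ℝ)*log ((n:ℝ)+1) - (n:ℝ)*log (n:ℝ) ≤ 1 := by nlinarith [hA]
  constructor
  · linarith [hlb, hf1, hmono2, hA', hlogn1, hexp]
  · linarith [hub, hf2, hmono1, hlogn, hlogx0]

lemma tendsto_eps_log_sub (p : ℝ) (hp : 1 < p) :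
    Tendsto (fun q : ℝ => (1/p - 1/q) * log (q - p)) (𝓝[>] p) (𝓝 0) := by
  have hp0 : (0:ℝ) < p := by linarith
  have hid : Tendsto (fun q : ℝ => q) (𝓝[>] p) (𝓝 p) :=
    tendsto_id.mono_left nhdsWithin_le_nhds
  have hsub0 : Tendsto (fun q : ℝ => q - p) (𝓝[>] p) (𝓝[>] 0) := by
    apply tendsto_nhdsWithin_of_tendsto_nhds_of_eventually_within
    · simpa using hid.sub_const p
    · filter_upwards [self_mem_nhdsWithin] with q hq; exact sub_pos.mpr (mem_Ioi.mp hq)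
  have hxlx : Tendsto (fun t : ℝ => log t * t) (𝓝[>] 0) (𝓝 0) := by
    have := tendsto_log_mul_rpow_nhdsGT_zero one_pos
    simpa [Real.rpow_one] using this
  have hcomp : Tendsto (fun q : ℝ => log (q - p) * (q - p)) (𝓝[>] p) (𝓝 0) := hxlx.comp hsub0
  have hconst : Tendsto (fun q : ℝ => 1/(p*q)) (𝓝[>] p) (𝓝 (1/(p*p))) :=
    tendsto_const_nhds.div (tendsto_const_nhds.mul hid) (by positivity)
  have hmul := hcomp.mul hconst
  rw [zero_mul] at hmul
  apply Tendsto.congr' _ hmul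
  filter_upwards [self_mem_nhdsWithin] with q hq
  have hq0 : (0:ℝ) < q := lt_trans hp0 hq
  field_simp

lemma tendsto_small (p : ℝ) (hp : 1 < p) (u : ℝ → ℝ) (l : ℝ) (hl : 0 < l)
    (hu : Tendsto u (𝓝[>] p) (𝓝 l)) :
    Tendsto (fun q : ℝ => (1/p - 1/q) *
      (log (Real.Gamma (u q / (q - p))) -
        (u q/(q-p) * log (u q/(q-p)) - u q/(q-p)))) (𝓝[>] p) (𝓝 0) := by
  have hp0 : (0:ℝ) < p := by linarith
  have hid : Tendsto (fun q : ℝ => q) (𝓝[>] p) (𝓝 p) :=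
    tendsto_id.mono_left nhdsWithin_le_nhds
  have hinv : Tendsto (fun q : ℝ => 1/p - 1/q) (𝓝[>] p) (𝓝 0) := by
    have h1 : Tendsto (fun q : ℝ => 1/q) (𝓝[>] p) (𝓝 (1/p)) :=
      tendsto_const_nhds.div hid (ne_of_gt hp0)
    have h2 : Tendsto (fun q : ℝ => 1/p - 1/q) (𝓝[>] p) (𝓝 (1/p - 1/p)) :=
      Tendsto.sub tendsto_const_nhds h1
    simpa using h2
  have htlog := tendsto_eps_log_sub p hp
  have hlogu : Tendsto (fun q => log (u q)) (𝓝[>] p) (𝓝 (log l)) :=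
    (Real.continuousAt_log (ne_of_gt hl)).tendsto.comp hu
  have hg : Tendsto (fun q : ℝ => (1/p - 1/q) * (2 * log (u q) + 2) -
      2*((1/p - 1/q) * log (q - p))) (𝓝[>] p) (𝓝 0) := by
    have h1 : Tendsto (fun q : ℝ => (1/p - 1/q) * (2 * log (u q) + 2)) (𝓝[>] p)
        (𝓝 (0 * (2 * log l + 2))) :=
      hinv.mul ((hlogu.const_mul 2).add tendsto_const_nhds)
    have h2 : Tendsto (fun q : ℝ => 2 * ((1/p - 1/q) * log (q - p))) (𝓝[>] p) (𝓝 (2 * 0)) :=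
      htlog.const_mul 2
    simpa using h1.sub h2
  apply squeeze_zero_norm' _ hg
  have hul : ∀ᶠ q in 𝓝[>] p, l/2 < u q := hu.eventually (eventually_gt_nhds (by linarith))
  have hQ : Ioo p (p + l/2) ∈ 𝓝[>] p :=
    Ioo_mem_nhdsGT (by linarith)
  filter_upwards [hul, hQ] with q hq1 hq2
  obtain ⟨hqp, hql⟩ := hq2
  have ht0 : (0:ℝ) < q - p := sub_pos.mpr hqp
  have hu0 : (0:ℝ) < u q := lt_trans (by linarith) hq1
  have hx1 : (1:ℝ) ≤ u q / (q - p) := by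
    rw [le_div_iff₀ ht0]; linarith
  have hε : (0:ℝ) < 1/p - 1/q := by
    have : 1/q < 1/p := one_div_lt_one_div_of_lt hp0 hqp
    linarith
  have hbound := abs_logGamma_sub (u q / (q - p)) hx1
  have hlogdiv : log (u q / (q - p)) = log (u q) - log (q - p) :=
    Real.log_div (ne_of_gt hu0) (ne_of_gt ht0)
  calc ‖(1/p - 1/q) * (log (Real.Gamma (u q / (q - p))) -
        (u q/(q-p) * log (u q/(q-p)) - u q/(q-p)))‖
      = (1/p - 1/q) * |log (Real.Gamma (u q / (q - p))) -
        (u q/(q-p) * log (u q/(q-p)) - u q/(q-p))| := by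
        rw [Real.norm_eq_abs, abs_mul, abs_of_pos hε]
    _ ≤ (1/p - 1/q) * (2 * log (u q / (q - p)) + 2) :=
        mul_le_mul_of_nonneg_left hbound (le_of_lt hε)
    _ = (1/p - 1/q) * (2 * log (u q) + 2) - 2*((1/p - 1/q) * log (q - p)) := by
        rw [hlogdiv]; ring

lemma T4_limit (p : ℝ) (hp : 1 < p) :
    Tendsto (fun q : ℝ => (((q - p) / p * Real.Gamma (p * q / (q - p))) /
        (Real.Gamma (p / (q - p)) * Real.Gamma (p * (q - 1) / (q - p)))) ^ (1/p - 1/q))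
      (𝓝[>] p) (𝓝 (Real.exp (log p + (1/p - 1) * log (p - 1)))) := by
  have hp0 : (0:ℝ) < p := by linarith
  have hp1 : (0:ℝ) < p - 1 := by linarith
  have hid : Tendsto (fun q : ℝ => q) (𝓝[>] p) (𝓝 p) :=
    tendsto_id.mono_left nhdsWithin_le_nhds
  have hinv : Tendsto (fun q : ℝ => 1/p - 1/q) (𝓝[>] p) (𝓝 0) := by
    have h1 : Tendsto (fun q : ℝ => 1/q) (𝓝[>] p) (𝓝 (1/p)) :=
      tendsto_const_nhds.div hid (ne_of_gt hp0)
    have h2 : Tendsto (fun q : ℝ => 1/p - 1/q) (𝓝[>] p) (𝓝 (1/p - 1/p)) :=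
      Tendsto.sub tendsto_const_nhds h1
    simpa using h2
  -- the G part
  have hG : Tendsto (fun q : ℝ =>
      (1/q) * (q * log (p*q) - log p - (q-1) * log (p*(q-1)))) (𝓝[>] p)
      (𝓝 (log p + (1/p - 1) * log (p - 1))) := by
    have hlpq : Tendsto (fun q : ℝ => log (p*q)) (𝓝[>] p) (𝓝 (log (p*p))) :=
      ((Real.continuousAt_log (by positivity)).tendsto).comp (tendsto_const_nhds.mul hid)
    have hlpq1 : Tendsto (fun q : ℝ => log (p*(q-1))) (𝓝[>] p) (𝓝 (log (p*(p-1)))) :=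
      ((Real.continuousAt_log (by positivity)).tendsto).comp
        (tendsto_const_nhds.mul (hid.sub_const 1))
    have hinvq : Tendsto (fun q : ℝ => 1/q) (𝓝[>] p) (𝓝 (1/p)) :=
      tendsto_const_nhds.div hid (ne_of_gt hp0)
    have hmain : Tendsto (fun q : ℝ =>
        (1/q) * (q * log (p*q) - log p - (q-1) * log (p*(q-1)))) (𝓝[>] p)
        (𝓝 ((1/p) * (p * log (p*p) - log p - (p-1) * log (p*(p-1))))) :=
      hinvq.mul (((hid.mul hlpq).sub tendsto_const_nhds).sub ((hid.sub_const 1).mul hlpq1))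
    have hval : (1/p) * (p * log (p*p) - log p - (p-1) * log (p*(p-1)))
        = log p + (1/p - 1) * log (p - 1) := by
      rw [Real.log_mul (ne_of_gt hp0) (ne_of_gt hp0), Real.log_mul (ne_of_gt hp0) (ne_of_gt hp1)]
      field_simp
      ring
    rwa [hval] at hmain
  have hsa := tendsto_small p hp (fun q => p*q) (p*p) (by positivity)
    (tendsto_const_nhds.mul hid)
  have hsb := tendsto_small p hp (fun _ => p) p hp0 tendsto_const_nhds
  have hsc := tendsto_small p hp (fun q => p*(q-1)) (p*(p-1)) (by positivity)
    (tendsto_const_nhds.mul (hid.sub_const 1))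
  have hel := tendsto_eps_log_sub p hp
  have help : Tendsto (fun q : ℝ => (1/p - 1/q) * log p) (𝓝[>] p) (𝓝 0) := by
    have := hinv.mul_const (log p); simpa using this
  -- total function
  have hT : Tendsto (fun q : ℝ =>
      ((1/q) * (q * log (p*q) - log p - (q-1) * log (p*(q-1)))
        + ((1/p - 1/q) * log (q - p) - (1/p - 1/q) * log p))
        + (((1/p - 1/q) * (log (Real.Gamma ((fun q => p*q) q / (q - p))) -
            ((fun q => p*q) q/(q-p) * log ((fun q => p*q) q/(q-p)) - (fun q => p*q) q/(q-p)))
          - (1/p - 1/q) * (log (Real.Gamma ((fun _ => p) q / (q - p))) -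
            ((fun _ => p) q/(q-p) * log ((fun _ => p) q/(q-p)) - (fun _ => p) q/(q-p))))
          - (1/p - 1/q) * (log (Real.Gamma ((fun q => p*(q-1)) q / (q - p))) -
            ((fun q => p*(q-1)) q/(q-p) * log ((fun q => p*(q-1)) q/(q-p)) -
              (fun q => p*(q-1)) q/(q-p)))))
      (𝓝[>] p) (𝓝 (((log p + (1/p - 1) * log (p - 1)) + (0 - 0)) + ((0 - 0) - 0))) :=
    ((hG.add (hel.sub help))).add ((hsa.sub hsb).sub hsc)
  rw [show (log p + (1/p - 1) * log (p - 1) + (0 - 0) + (0 - 0 - 0))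
      = log p + (1/p - 1) * log (p - 1) by ring] at hT
  -- identify with ε * log X eventually
  have heq : ∀ᶠ q in 𝓝[>] p,
      (((1/q) * (q * log (p*q) - log p - (q-1) * log (p*(q-1)))
        + ((1/p - 1/q) * log (q - p) - (1/p - 1/q) * log p))
        + (((1/p - 1/q) * (log (Real.Gamma ((fun q => p*q) q / (q - p))) -
            ((fun q => p*q) q/(q-p) * log ((fun q => p*q) q/(q-p)) - (fun q => p*q) q/(q-p)))
          - (1/p - 1/q) * (log (Real.Gamma ((fun _ => p) q / (q - p))) -
            ((fun _ => p) q/(q-p) * log ((fun _ => p) q/(q-p)) - (fun _ => p) q/(q-p))))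
          - (1/p - 1/q) * (log (Real.Gamma ((fun q => p*(q-1)) q / (q - p))) -
            ((fun q => p*(q-1)) q/(q-p) * log ((fun q => p*(q-1)) q/(q-p)) -
              (fun q => p*(q-1)) q/(q-p)))))
      = (1/p - 1/q) * log (((q - p) / p * Real.Gamma (p * q / (q - p))) /
          (Real.Gamma (p / (q - p)) * Real.Gamma (p * (q - 1) / (q - p)))) := by
    filter_upwards [self_mem_nhdsWithin] with q hq
    beta_reduce
    have ht0 : (0:ℝ) < q - p := sub_pos.mpr hq
    have hq1 : (0:ℝ) < q - 1 := by linarith [lt_trans hp hq]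
    have hq0 : (0:ℝ) < q := by linarith
    have hΓa := Real.Gamma_pos_of_pos (div_pos (mul_pos hp0 hq0) ht0)
    have hΓb := Real.Gamma_pos_of_pos (div_pos hp0 ht0)
    have hΓc := Real.Gamma_pos_of_pos (div_pos (mul_pos hp0 hq1) ht0)
    rw [Real.log_div (mul_pos (div_pos ht0 hp0) hΓa).ne' (mul_pos hΓb hΓc).ne',
      Real.log_mul (div_pos ht0 hp0).ne' (ne_of_gt hΓa),
      Real.log_mul (ne_of_gt hΓb) (ne_of_gt hΓc),
      Real.log_div (ne_of_gt ht0) (ne_of_gt hp0),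
      Real.log_div (mul_pos hp0 hq0).ne' (ne_of_gt ht0),
      Real.log_div (ne_of_gt hp0) (ne_of_gt ht0),
      Real.log_div (mul_pos hp0 hq1).ne' (ne_of_gt ht0)]
    field_simp
    ring
  have hlogX := hT.congr' heq
  -- exponentiate
  have hfin := (Real.continuous_exp.tendsto _).comp hlogX
  apply Tendsto.congr' _ hfin
  filter_upwards [self_mem_nhdsWithin] with q hq
  have ht0 : (0:ℝ) < q - p := sub_pos.mpr hq
  have hq1 : (0:ℝ) < q - 1 := by linarith [lt_trans hp hq]
  have hq0 : (0:ℝ) < q := by linarith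
  have hΓa := Real.Gamma_pos_of_pos (div_pos (mul_pos hp0 hq0) ht0)
  have hΓb := Real.Gamma_pos_of_pos (div_pos hp0 ht0)
  have hΓc := Real.Gamma_pos_of_pos (div_pos (mul_pos hp0 hq1) ht0)
  have hX : (0:ℝ) < ((q - p) / p * Real.Gamma (p * q / (q - p))) /
      (Real.Gamma (p / (q - p)) * Real.Gamma (p * (q - 1) / (q - p))) :=
    div_pos (mul_pos (div_pos ht0 hp0) hΓa) (mul_pos hΓb hΓc)
  rw [Function.comp_apply, Real.rpow_def_of_pos hX, mul_comm]

theorem sharp_constant_limit_euclidean (n : ℕ) (hn : 1 ≤ n) (p α ω : ℝ) (hp : 1 < p)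
    (hα : α < n * (p - 1)) (hω : 0 < ω) :
    Tendsto (fun q : ℝ =>
        ω ^ (1 + 1 / q - 1 / p) *
          ((p - 1) / (n * (p - 1) - α)) ^ (1 / (p / (p - 1)) + 1 / q) *
          ((p / (p - 1)) / q) ^ (1 / p) *
          (((q - p) / p * Real.Gamma (p * q / (q - p))) /
              (Real.Gamma (p / (q - p)) * Real.Gamma (p * (q - 1) / (q - p)))) ^ (1 / p - 1 / q))
      (nhdsWithin p (Ioi p)) (nhds (p * ω / (n * (p - 1) - α))) := by
  have hp0 : (0:ℝ) < p := by linarith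
  have hp1 : (0:ℝ) < p - 1 := by linarith
  have hD : (0:ℝ) < (n:ℝ) * (p - 1) - α := by linarith
  have hid : Tendsto (fun q : ℝ => q) (𝓝[>] p) (𝓝 p) :=
    tendsto_id.mono_left nhdsWithin_le_nhds
  have hinvq : Tendsto (fun q : ℝ => 1/q) (𝓝[>] p) (𝓝 (1/p)) :=
    tendsto_const_nhds.div hid (ne_of_gt hp0)
  have hT1 : Tendsto (fun q : ℝ => ω ^ (1 + 1/q - 1/p)) (𝓝[>] p)
      (𝓝 (ω ^ (1 + 1/p - 1/p))) :=
    Tendsto.rpow tendsto_const_nhds ((tendsto_const_nhds.add hinvq).sub_const (1/p))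
      (Or.inl (ne_of_gt hω))
  have hT2 : Tendsto (fun q : ℝ => ((p - 1) / ((n:ℝ) * (p - 1) - α)) ^ (1/(p/(p-1)) + 1/q))
      (𝓝[>] p) (𝓝 (((p - 1) / ((n:ℝ) * (p - 1) - α)) ^ (1/(p/(p-1)) + 1/p))) :=
    Tendsto.rpow tendsto_const_nhds (tendsto_const_nhds.add hinvq)
      (Or.inl (ne_of_gt (div_pos hp1 hD)))
  have hT3 : Tendsto (fun q : ℝ => ((p/(p-1))/q) ^ (1/p)) (𝓝[>] p)
      (𝓝 (((p/(p-1))/p) ^ (1/p))) :=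
    Tendsto.rpow (tendsto_const_nhds.div hid (ne_of_gt hp0)) tendsto_const_nhds
      (Or.inl (ne_of_gt (div_pos (div_pos hp0 hp1) hp0)))
  have hT4 := T4_limit p hp
  have total := ((hT1.mul hT2).mul hT3).mul hT4
  have hval : ω ^ (1 + 1/p - 1/p) * ((p - 1) / ((n:ℝ) * (p - 1) - α)) ^ (1/(p/(p-1)) + 1/p) *
      ((p/(p-1))/p) ^ (1/p) * Real.exp (log p + (1/p - 1) * log (p - 1))
      = p * ω / ((n:ℝ) * (p - 1) - α) := by
    rw [show (1:ℝ) + 1/p - 1/p = 1 by ring, Real.rpow_one,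
      show 1/(p/(p-1)) + 1/p = 1 by field_simp; ring, Real.rpow_one,
      show (p/(p-1))/p = (p-1)⁻¹ by rw [div_div, mul_comm, ← div_div, div_self (ne_of_gt hp0), one_div],
      Real.exp_add, Real.exp_log hp0]
    have h4 : Real.exp ((1/p - 1) * log (p-1)) = (p-1) ^ ((1:ℝ)/p - 1) := by
      rw [Real.rpow_def_of_pos hp1, mul_comm]
    rw [h4, Real.inv_rpow hp1.le]
    have h6 : (p-1) ^ ((1:ℝ)/p - 1) = (p-1) ^ ((1:ℝ)/p) * (p-1) ^ (-(1:ℝ)) := by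
      rw [← Real.rpow_add hp1]; ring_nf
    rw [h6, Real.rpow_neg_one]
    have hpow0 : (0:ℝ) < (p-1) ^ ((1:ℝ)/p) := Real.rpow_pos_of_pos hp1 _
    field_simp
  rw [hval] at total
  exact total
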